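/- Let φ: R' → R be a component-wise isomorphic epimorphism of graded rings accompanied by a group epimorphism ψ: K' → K. Then the assignments a' ↦ φ(a') and a ↦ ⟨φ^{-1}(a) ∩ R'^+⟩ are mutually inverse bijections between the set of K'-graded ideals of R' and the set of K-graded ideals of R, and these bijections respect inclusions, sums, products, and intersections. -/

import Mathlib

section Aux

variable {K' K R' R : Type*} [AddCommGroup K'] [DecidableEq K'] [AddCommGroup K]
    [DecidableEq K] [CommRing R'] [CommRing R]
    (𝒜' : K' → AddSubgroup R') [GradedRing 𝒜'] (𝒜 : K → AddSubgroup R) [GradedRing 𝒜]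
    (φ : R' →+* R) (ψ : K' →+ K)

/-- The degree-`i` component of `φ x` is the sum of images of the components of `x`
in degrees mapping to `i`. -/
theorem cie_proj_map [∀ (i : K') (x : 𝒜' i), Decidable (x ≠ 0)]
    (hmap : ∀ (w' : K') (r : R'), r ∈ 𝒜' w' → φ r ∈ 𝒜 (ψ w')) (x : R') (i : K) :
    GradedRing.proj 𝒜 i (φ x) =
      ∑ v ∈ (DirectSum.decompose 𝒜' x).support.filter (fun v => ψ v = i),
        φ (DirectSum.decompose 𝒜' x v : R') := by
  classical
  conv_lhs => rw [← DirectSum.sum_support_decompose 𝒜' x]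
  rw [map_sum, map_sum, Finset.sum_filter]
  refine Finset.sum_congr rfl fun v _ => ?_
  by_cases h : ψ v = i
  · rw [if_pos h, GradedRing.proj_apply,
      DirectSum.decompose_of_mem_same 𝒜 (h ▸ hmap v _ (SetLike.coe_mem _))]
  · rw [if_neg h, GradedRing.proj_apply,
      DirectSum.decompose_of_mem_ne 𝒜 (hmap v _ (SetLike.coe_mem _)) h]

/-- Key lemma: a homogeneous element whose image lies in the image of a homogeneous ideal
already lies in that ideal. -/
theorem cie_mem_of_homog [∀ (i : K') (x : 𝒜' i), Decidable (x ≠ 0)]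
    (hφ : Function.Surjective φ)
    (hmap : ∀ (w' : K') (r : R'), r ∈ 𝒜' w' → φ r ∈ 𝒜 (ψ w'))
    (hinj : ∀ (w' : K') (r s : R'), r ∈ 𝒜' w' → s ∈ 𝒜' w' → φ r = φ s → r = s)
    (hsur : ∀ (w' : K') (y : R), y ∈ 𝒜 (ψ w') → ∃ r ∈ 𝒜' w', φ r = y)
    {a' : Ideal R'} (ha' : Ideal.IsHomogeneous 𝒜' a')
    {w' : K'} {r' : R'} (hr' : r' ∈ 𝒜' w') (hmem : φ r' ∈ Ideal.map φ a') :
    r' ∈ a' := by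
  classical
  obtain ⟨x, hx, hxe⟩ := (Ideal.mem_map_iff_of_surjective φ hφ).1 hmem
  set s := (DirectSum.decompose 𝒜' x).support.filter (fun v => ψ v = ψ w') with hs
  have hex : ∀ v : K', ∃ u : R', ψ v = ψ w' → u ∈ 𝒜' (w' - v) ∧ φ u = 1 := by
    intro v
    by_cases h : ψ v = ψ w'
    · obtain ⟨u, hu, hu1⟩ := hsur (w' - v) 1 (by
        rw [map_sub, h, sub_self]
        exact SetLike.GradedOne.one_mem)
      exact ⟨u, fun _ => ⟨hu, hu1⟩⟩
    · exact ⟨0, fun h' => absurd h' h⟩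
  choose u hu using hex
  set z : R' := ∑ v ∈ s, u v * (DirectSum.decompose 𝒜' x v : R') with hz
  have hψs : ∀ v ∈ s, ψ v = ψ w' := fun v hv => (Finset.mem_filter.1 hv).2
  have hz𝒜 : z ∈ 𝒜' w' := by
    refine AddSubgroup.sum_mem _ fun v hv => ?_
    have := SetLike.mul_mem_graded ((hu v (hψs v hv)).1) (SetLike.coe_mem (DirectSum.decompose 𝒜' x v))
    rwa [sub_add_cancel] at this
  have hza : z ∈ a' := Ideal.sum_mem _ fun v _ => Ideal.mul_mem_left _ _ (ha' v hx)
  have hφz : φ z = φ r' := by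
    have h1 : φ z = ∑ v ∈ s, φ (DirectSum.decompose 𝒜' x v : R') := by
      rw [hz, map_sum]
      exact Finset.sum_congr rfl fun v hv => by
        rw [map_mul, (hu v (hψs v hv)).2, one_mul]
    have h2 : φ r' = GradedRing.proj 𝒜 (ψ w') (φ r') := by
      rw [GradedRing.proj_apply,
        DirectSum.decompose_of_mem_same 𝒜 (hmap w' r' hr')]
    rw [h1, h2, ← hxe, cie_proj_map 𝒜' 𝒜 φ ψ hmap]
  exact hinj w' r' z hr' hz𝒜 hφz.symm ▸ hza

end Aux

/-- For a component-wise isomorphic epimorphism (CIE) `φ : R' → R` of graded rings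
accompanied by a group epimorphism `ψ : K' → K`, the assignments `a' ↦ φ(a')` and
`a ↦ ⟨φ⁻¹(a) ∩ R'⁺⟩` are mutually inverse bijections between graded ideals of `R'` and graded
ideals of `R`, respecting inclusions, sums, products and intersections. -/
theorem stmt_6 {K' K R' R : Type*} [AddCommGroup K'] [DecidableEq K'] [AddCommGroup K]
    [DecidableEq K] [CommRing R'] [CommRing R]
    (𝒜' : K' → AddSubgroup R') [GradedRing 𝒜'] (𝒜 : K → AddSubgroup R) [GradedRing 𝒜]
    (φ : R' →+* R) (ψ : K' →+ K) (hψ : Function.Surjective ψ)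
    (hφ : Function.Surjective φ)
    (hmap : ∀ (w' : K') (r : R'), r ∈ 𝒜' w' → φ r ∈ 𝒜 (ψ w'))
    (hinj : ∀ (w' : K') (r s : R'), r ∈ 𝒜' w' → s ∈ 𝒜' w' → φ r = φ s → r = s)
    (hsur : ∀ (w' : K') (y : R), y ∈ 𝒜 (ψ w') → ∃ r ∈ 𝒜' w', φ r = y) :
    letI G : Ideal R → Ideal R' :=
      fun a => Ideal.span (φ ⁻¹' (a : Set R) ∩ {r : R' | SetLike.IsHomogeneousElem 𝒜' r ∧ r ≠ 0})
    -- the maps preserve gradedness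
    (∀ a' : Ideal R', Ideal.IsHomogeneous 𝒜' a' → Ideal.IsHomogeneous 𝒜 (Ideal.map φ a')) ∧
    (∀ a : Ideal R, Ideal.IsHomogeneous 𝒜 a → Ideal.IsHomogeneous 𝒜' (G a)) ∧
    -- mutually inverse
    (∀ a' : Ideal R', Ideal.IsHomogeneous 𝒜' a' → G (Ideal.map φ a') = a') ∧
    (∀ a : Ideal R, Ideal.IsHomogeneous 𝒜 a → Ideal.map φ (G a) = a) ∧
    -- respect inclusions, sums, products and intersections
    (∀ a' b' : Ideal R', Ideal.IsHomogeneous 𝒜' a' → Ideal.IsHomogeneous 𝒜' b' →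
      ((a' ≤ b' ↔ Ideal.map φ a' ≤ Ideal.map φ b') ∧
        Ideal.map φ (a' ⊔ b') = Ideal.map φ a' ⊔ Ideal.map φ b' ∧
        Ideal.map φ (a' * b') = Ideal.map φ a' * Ideal.map φ b' ∧
        Ideal.map φ (a' ⊓ b') = Ideal.map φ a' ⊓ Ideal.map φ b')) := by
  classical
  set G : Ideal R → Ideal R' :=
    fun a => Ideal.span (φ ⁻¹' (a : Set R) ∩ {r : R' | SetLike.IsHomogeneousElem 𝒜' r ∧ r ≠ 0}) with hG
  -- map preserves homogeneity
  have mapHomog : ∀ a' : Ideal R', Ideal.IsHomogeneous 𝒜' a' →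
      Ideal.IsHomogeneous 𝒜 (Ideal.map φ a') := by
    intro a' ha' i r hr
    obtain ⟨x, hx, rfl⟩ := (Ideal.mem_map_iff_of_surjective φ hφ).1 hr
    have : (DirectSum.decompose 𝒜 (φ x) i : R) = GradedRing.proj 𝒜 i (φ x) :=
      (GradedRing.proj_apply 𝒜 i (φ x)).symm
    rw [this, cie_proj_map 𝒜' 𝒜 φ ψ hmap]
    exact Ideal.sum_mem _ fun v _ => Ideal.mem_map_of_mem φ (ha' v hx)
  -- G preserves homogeneity
  have GHomog : ∀ a : Ideal R, Ideal.IsHomogeneous 𝒜' (G a) := fun a =>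
    Ideal.homogeneous_span 𝒜' _ fun x hx => hx.2.1
  -- G ∘ map = id
  have GmapEq : ∀ a' : Ideal R', Ideal.IsHomogeneous 𝒜' a' → G (Ideal.map φ a') = a' := by
    intro a' ha'
    refine le_antisymm (Ideal.span_le.2 ?_) ?_
    · rintro r ⟨hpre, ⟨w', hw'⟩, -⟩
      exact cie_mem_of_homog 𝒜' 𝒜 φ ψ hφ hmap hinj hsur ha' hw' hpre
    · intro r hr
      rw [← DirectSum.sum_support_decompose 𝒜' r]
      refine Ideal.sum_mem _ fun v hv => Ideal.subset_span ?_
      refine ⟨Ideal.mem_map_of_mem φ (ha' v hr), ⟨v, SetLike.coe_mem _⟩, ?_⟩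
      intro h0
      exact DFinsupp.mem_support_iff.1 hv (Subtype.ext h0)
  -- map ∘ G = id
  have mapGEq : ∀ a : Ideal R, Ideal.IsHomogeneous 𝒜 a → Ideal.map φ (G a) = a := by
    intro a ha
    refine le_antisymm ?_ ?_
    · rw [show G a = Ideal.span _ from rfl, Ideal.map_span, Ideal.span_le]
      rintro y ⟨r, ⟨hpre, -, -⟩, rfl⟩
      exact hpre
    · intro y hy
      rw [← DirectSum.sum_support_decompose 𝒜 y]
      refine Ideal.sum_mem _ fun i _ => ?_
      set yi : R := (DirectSum.decompose 𝒜 y i : R) with hyi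
      by_cases h0 : yi = 0
      · rw [h0]; exact Ideal.zero_mem _
      · obtain ⟨w', rfl⟩ := hψ i
        obtain ⟨r', hr'1, hr'2⟩ := hsur w' yi (SetLike.coe_mem _)
        have hrne : r' ≠ 0 := fun h => h0 (by rw [← hr'2, h, map_zero])
        have hrG : r' ∈ G a :=
          Ideal.subset_span ⟨show φ r' ∈ a from hr'2 ▸ ha _ hy, ⟨w', hr'1⟩, hrne⟩
        exact hr'2 ▸ Ideal.mem_map_of_mem φ hrG
  refine ⟨mapHomog, fun a _ => GHomog a, GmapEq, mapGEq, ?_⟩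
  intro a' b' ha' hb'
  refine ⟨⟨fun h => Ideal.map_mono h, fun h => ?_⟩, Ideal.map_sup φ a' b',
    Ideal.map_mul φ a' b', ?_⟩
  · calc a' = G (Ideal.map φ a') := (GmapEq a' ha').symm
      _ ≤ G (Ideal.map φ b') := Ideal.span_mono (by
          exact Set.inter_subset_inter_left _ (Set.preimage_mono h))
      _ = b' := GmapEq b' hb'
  · refine le_antisymm (le_inf (Ideal.map_mono inf_le_left) (Ideal.map_mono inf_le_right)) ?_
    intro y hy
    have hinf : Ideal.IsHomogeneous 𝒜 (Ideal.map φ a' ⊓ Ideal.map φ b') :=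
      (mapHomog a' ha').inf (mapHomog b' hb')
    rw [← DirectSum.sum_support_decompose 𝒜 y]
    refine Ideal.sum_mem _ fun i _ => ?_
    set yi : R := (DirectSum.decompose 𝒜 y i : R) with hyi
    obtain ⟨w', rfl⟩ := hψ i
    obtain ⟨r', hr'1, hr'2⟩ := hsur w' yi (SetLike.coe_mem _)
    have hyia : yi ∈ Ideal.map φ a' ⊓ Ideal.map φ b' := hinf _ hy
    have hra : r' ∈ a' :=
      cie_mem_of_homog 𝒜' 𝒜 φ ψ hφ hmap hinj hsur ha' hr'1 (hr'2 ▸ hyia.1)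
    have hrb : r' ∈ b' :=
      cie_mem_of_homog 𝒜' 𝒜 φ ψ hφ hmap hinj hsur hb' hr'1 (hr'2 ▸ hyia.2)
    exact hr'2 ▸ Ideal.mem_map_of_mem φ ⟨hra, hrb⟩
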